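/- Any trajectory of the system X' = X³ - X + Y²/√n, Y' = Y(X² - X/√n) starting at a point (X(0), Y(0)) with X(0)² + Y(0)² < 1 and Y(0) > 0 sufficiently close to (1,0) exists for all y ∈ (-∞, +∞) and converges to the origin (0,0) as y → +∞. -/

import Mathlib

open Filter Topology Set intervalIntegral

namespace SteadyAux

noncomputable def cl (t : ℝ) : ℝ := max (-2) (min 2 t)

lemma cl_abs_le (t : ℝ) : |cl t| ≤ 2 := by
  rw [abs_le]
  constructor
  · exact le_max_left _ _
  · exact max_le (by norm_num) (min_le_left _ _)

lemma cl_eq_self {t : ℝ} (h : |t| ≤ 2) : cl t = t := by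
  rw [abs_le] at h
  rw [cl, min_eq_right h.2, max_eq_right h.1]

lemma cl_lip (a b : ℝ) : |cl a - cl b| ≤ |a - b| := by
  rw [cl, cl, max_comm (-2) (min 2 a), max_comm (-2) (min 2 b)]
  refine (abs_max_sub_max_le_abs _ _ _).trans ?_
  rw [min_comm 2 a, min_comm 2 b]
  simpa using abs_min_sub_min_le_max a 2 b 2

noncomputable def fc (s : ℝ) (p : ℝ × ℝ) : ℝ × ℝ :=
  ((cl p.1) ^ 3 - cl p.1 + (cl p.2) ^ 2 / s, cl p.2 * ((cl p.1) ^ 2 - cl p.1 / s))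

lemma abs_div_le {s : ℝ} (hs : 1 ≤ s) (t : ℝ) : |t / s| ≤ |t| := by
  rw [abs_div]
  have h1 : |s| = s := abs_of_nonneg (by linarith)
  rw [h1]
  exact div_le_self (abs_nonneg t) hs

lemma fc_lip {s : ℝ} (hs : 1 ≤ s) : LipschitzWith 17 (fc s) := by
  apply LipschitzWith.of_dist_le_mul
  intro p q
  set a := cl p.1 with ha'
  set b := cl p.2 with hb'
  set c := cl q.1 with hc'
  set d := cl q.2 with hd'
  have ha := cl_abs_le p.1
  have hb := cl_abs_le p.2
  have hc := cl_abs_le q.1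
  have hd := cl_abs_le q.2
  set D := dist p q with hD'
  have hD : 0 ≤ D := dist_nonneg
  have hac : |a - c| ≤ D := by
    refine (cl_lip _ _).trans ?_
    rw [← Real.dist_eq, hD', Prod.dist_eq]
    exact le_max_left _ _
  have hbd : |b - d| ≤ D := by
    refine (cl_lip _ _).trans ?_
    rw [← Real.dist_eq, hD', Prod.dist_eq]
    exact le_max_right _ _
  rw [Prod.dist_eq]
  have key1 : dist (fc s p).1 (fc s q).1 ≤ 17 * D := by
    show dist (a ^ 3 - a + b ^ 2 / s) (c ^ 3 - c + d ^ 2 / s) ≤ 17 * D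
    rw [Real.dist_eq]
    have h3 : |a ^ 3 - c ^ 3| ≤ 12 * D := by
      have : a ^ 3 - c ^ 3 = (a - c) * (a ^ 2 + a * c + c ^ 2) := by ring
      rw [this, abs_mul]
      have h4 : |a ^ 2 + a * c + c ^ 2| ≤ 12 := by
        rw [abs_le] at ha hc ⊢
        constructor <;> nlinarith [ha.1, ha.2, hc.1, hc.2]
      calc |a - c| * |a ^ 2 + a * c + c ^ 2| ≤ D * 12 :=
            mul_le_mul hac h4 (abs_nonneg _) hD
        _ = 12 * D := by ring
    have h5 : |b ^ 2 / s - d ^ 2 / s| ≤ 4 * D := by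
      rw [div_sub_div_same]
      refine (abs_div_le hs _).trans ?_
      have : b ^ 2 - d ^ 2 = (b - d) * (b + d) := by ring
      rw [this, abs_mul]
      have h6 : |b + d| ≤ 4 := (abs_add_le _ _).trans (by linarith)
      calc |b - d| * |b + d| ≤ D * 4 := mul_le_mul hbd h6 (abs_nonneg _) hD
        _ = 4 * D := by ring
    calc |a ^ 3 - a + b ^ 2 / s - (c ^ 3 - c + d ^ 2 / s)|
        = |(a ^ 3 - c ^ 3) + (-(a - c)) + (b ^ 2 / s - d ^ 2 / s)| := by ring_nf
      _ ≤ |(a ^ 3 - c ^ 3) + (-(a - c))| + |b ^ 2 / s - d ^ 2 / s| := abs_add_le _ _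
      _ ≤ |a ^ 3 - c ^ 3| + |-(a - c)| + |b ^ 2 / s - d ^ 2 / s| :=
          add_le_add_left (abs_add_le _ _) _
      _ ≤ 12 * D + D + 4 * D := by
          rw [abs_neg]; exact add_le_add (add_le_add h3 hac) h5
      _ = 17 * D := by ring
  have key2 : dist (fc s p).2 (fc s q).2 ≤ 17 * D := by
    show dist (b * (a ^ 2 - a / s)) (d * (c ^ 2 - c / s)) ≤ 17 * D
    rw [Real.dist_eq]
    have h7 : |b * a ^ 2 - d * c ^ 2| ≤ 12 * D := by
      have : b * a ^ 2 - d * c ^ 2 = (b - d) * a ^ 2 + d * ((a - c) * (a + c)) := by ring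
      rw [this]
      refine (abs_add_le _ _).trans ?_
      rw [abs_mul, abs_mul, abs_mul]
      have h8 : |a ^ 2| ≤ 4 := by rw [abs_le] at ha ⊢; constructor <;> nlinarith [ha.1, ha.2]
      have h9 : |a + c| ≤ 4 := (abs_add_le _ _).trans (by linarith)
      have : |b - d| * |a ^ 2| ≤ D * 4 := mul_le_mul hbd h8 (abs_nonneg _) hD
      have : |d| * (|a - c| * |a + c|) ≤ 2 * (D * 4) := by
        refine mul_le_mul hd (mul_le_mul hac h9 (abs_nonneg _) hD)
          (by positivity) (by norm_num)
      nlinarith [abs_nonneg (a - c), abs_nonneg (b - d)]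
    have h10 : |b * a / s - d * c / s| ≤ 4 * D := by
      rw [div_sub_div_same]
      refine (abs_div_le hs _).trans ?_
      have : b * a - d * c = (b - d) * a + d * (a - c) := by ring
      rw [this]
      refine (abs_add_le _ _).trans ?_
      rw [abs_mul, abs_mul]
      have h11 : |b - d| * |a| ≤ D * 2 := mul_le_mul hbd ha (abs_nonneg _) hD
      have h12 : |d| * |a - c| ≤ 2 * D := by
        refine mul_le_mul hd hac (abs_nonneg _) (by norm_num)
      linarith
    calc |b * (a ^ 2 - a / s) - d * (c ^ 2 - c / s)|
        = |(b * a ^ 2 - d * c ^ 2) + (-(b * a / s - d * c / s))| := by ring_nf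
      _ ≤ |b * a ^ 2 - d * c ^ 2| + |-(b * a / s - d * c / s)| := abs_add_le _ _
      _ ≤ 12 * D + 4 * D := by rw [abs_neg]; exact add_le_add h7 h10
      _ ≤ 17 * D := by linarith
  exact le_trans (max_le key1 key2) (by norm_num)

lemma fc_norm {s : ℝ} (hs : 1 ≤ s) (p : ℝ × ℝ) : ‖fc s p‖ ≤ 14 := by
  set a := cl p.1
  set b := cl p.2
  have ha := cl_abs_le p.1
  have hb := cl_abs_le p.2
  rw [Prod.norm_def]
  apply max_le
  · show ‖a ^ 3 - a + b ^ 2 / s‖ ≤ 14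
    rw [Real.norm_eq_abs]
    have h1 : |a ^ 3| ≤ 8 := by
      rw [abs_pow]
      calc |a| ^ 3 ≤ 2 ^ 3 := pow_le_pow_left₀ (abs_nonneg _) ha 3
        _ = 8 := by norm_num
    have h2 : |b ^ 2 / s| ≤ 4 := by
      refine (abs_div_le hs _).trans ?_
      rw [abs_pow]; nlinarith [abs_nonneg b]
    calc |a ^ 3 - a + b ^ 2 / s| ≤ |a ^ 3 - a| + |b ^ 2 / s| := abs_add_le _ _
      _ ≤ |a ^ 3| + |a| + |b ^ 2 / s| := add_le_add_left (abs_sub _ _) _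
      _ ≤ 8 + 2 + 4 := by gcongr
      _ = 14 := by norm_num
  · show ‖b * (a ^ 2 - a / s)‖ ≤ 14
    rw [Real.norm_eq_abs, abs_mul]
    have h3 : |a ^ 2 - a / s| ≤ 6 := by
      have h4 : |a ^ 2| ≤ 4 := by rw [abs_pow]; nlinarith [abs_nonneg a]
      have h5 : |a / s| ≤ 2 := (abs_div_le hs _).trans ha
      calc |a ^ 2 - a / s| ≤ |a ^ 2| + |a / s| := abs_sub _ _
        _ ≤ 6 := by linarith
    calc |b| * |a ^ 2 - a / s| ≤ 2 * 6 :=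
        mul_le_mul hb h3 (abs_nonneg _) (by norm_num)
      _ ≤ 14 := by norm_num


lemma exists_sol {s : ℝ} (hs : 1 ≤ s) (x₀ : ℝ × ℝ) :
    ∃ u : ℝ → ℝ × ℝ, u 0 = x₀ ∧ ∀ y, HasDerivAt u (fc s (u y)) y := by
  have key : ∀ T : ℝ, 0 < T → ∃ α : ℝ → ℝ × ℝ, α 0 = x₀ ∧
      ∀ t ∈ Ioo (-T) T, HasDerivAt α (fc s (α t)) t := by
    intro T hT
    have hpl : IsPicardLindelof (fun _ p => fc s p) (tmin := -T) (tmax := T)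
        ⟨0, by constructor <;> linarith⟩ x₀ (Real.toNNReal (14 * T)) 0 14 17 :=
      { lipschitzOnWith := fun t _ => (fc_lip hs).lipschitzOnWith
        continuousOn := fun x _ => continuousOn_const
        norm_le := fun t _ x _ => fc_norm hs x
        mul_max_le := by
          rw [Real.coe_toNNReal _ (by positivity)]
          norm_num }
    obtain ⟨α, hα0, hα⟩ := hpl.exists_eq_forall_mem_Icc_hasDerivWithinAt₀
    refine ⟨α, hα0, fun t ht => ?_⟩
    exact (hα t (Ioo_subset_Icc_self ht)).hasDerivAt (Icc_mem_nhds ht.1 ht.2)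
  choose α hα0 hα using fun k : ℕ => key (k + 1) (by positivity)
  have hcons : ∀ j k : ℕ, j ≤ k →
      EqOn (α j) (α k) (Ioo (-(j + 1) : ℝ) (j + 1)) := by
    intro j k hjk
    have hjk' : ((j : ℝ) + 1) ≤ (k : ℝ) + 1 := by exact_mod_cast Nat.succ_le_succ hjk
    refine ODE_solution_unique_of_mem_Ioo
      (v := fun _ p => fc s p) (s := fun _ => (univ : Set (ℝ × ℝ))) (K := 17)
      (fun t _ => (fc_lip hs).lipschitzOnWith)
      (t₀ := 0) (a := (-(j + 1) : ℝ)) (b := ((j : ℝ) + 1))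
      (by constructor <;> [linarith [Nat.cast_nonneg (α := ℝ) j]; linarith [Nat.cast_nonneg (α := ℝ) j]])
      (fun t ht => ⟨hα j t ht, trivial⟩)
      (fun t ht => ⟨hα k t ⟨by linarith [ht.1], by linarith [ht.2]⟩, trivial⟩)
      (by rw [hα0 j, hα0 k])
  set u : ℝ → ℝ × ℝ := fun y => α ⌊|y|⌋₊ y with hu'
  have hEq : ∀ k : ℕ, EqOn u (α k) (Ioo (-(k + 1) : ℝ) (k + 1)) := by
    intro k z hz
    have hzk : |z| < (k : ℝ) + 1 := abs_lt.mpr ⟨by linarith [hz.1], hz.2⟩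
    have hfl : ⌊|z|⌋₊ ≤ k := by
      have := (Nat.floor_lt (abs_nonneg z)).mpr (by exact_mod_cast hzk)
      omega
    have hzj : z ∈ Ioo (-((⌊|z|⌋₊ : ℝ) + 1)) ((⌊|z|⌋₊ : ℝ) + 1) := by
      have := Nat.lt_floor_add_one |z|
      rcases abs_lt.mp this with ⟨h1, h2⟩
      exact ⟨h1, h2⟩
    exact hcons ⌊|z|⌋₊ k hfl hzj
  have hu0 : u 0 = x₀ := by
    show α ⌊|(0 : ℝ)|⌋₊ 0 = x₀
    rw [abs_zero, Nat.floor_zero]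
    exact hα0 0
  refine ⟨u, hu0, fun y => ?_⟩
  set k := ⌊|y|⌋₊ with hk'
  have hy : y ∈ Ioo (-(k + 1) : ℝ) (k + 1) := by
    have := Nat.lt_floor_add_one |y|
    rcases abs_lt.mp this with ⟨h1, h2⟩
    exact ⟨h1, h2⟩
  have hnbhd : Ioo (-(k + 1) : ℝ) (k + 1) ∈ 𝓝 y := Ioo_mem_nhds hy.1 hy.2
  have heq : u =ᶠ[𝓝 y] α k := Filter.eventuallyEq_of_mem hnbhd (hEq k)
  have : HasDerivAt (α k) (fc s (α k y)) y := hα k y hy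
  rw [show u y = α k y from hEq k hy]
  exact this.congr_of_eventuallyEq heq


lemma bump {g : ℝ → ℝ} (hgc : Continuous g)
    (hlip : ∀ a b, |g a - g b| ≤ 6 * |a - b|) {ε t : ℝ} (hε : 0 < ε)
    (ht : ε ≤ g t) : ε ^ 2 / 12 ≤ ∫ y in t..(t + ε / 6), g y := by
  have hle : t ≤ t + ε / 6 := by linarith
  have h1 : ∀ z ∈ Icc t (t + ε / 6), ε - 6 * (z - t) ≤ g z := by
    intro z hz
    have h2 := hlip z t
    rw [abs_of_nonneg (by linarith [hz.1] : (0:ℝ) ≤ z - t)] at h2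
    have := abs_le.mp h2
    linarith [this.1]
  have hcalc : (∫ z in t..(t + ε / 6), (ε - 6 * (z - t))) = ε ^ 2 / 12 := by
    have hi1 : (∫ z in t..(t + ε / 6), (ε - 6 * (z - t)))
        = (∫ z in t..(t + ε / 6), (ε + 6 * t) - 6 * z) := by
      congr 1; funext z; ring
    rw [hi1]
    rw [integral_sub (g := fun z : ℝ => 6 * z) intervalIntegrable_const
      ((continuous_const.mul continuous_id').intervalIntegrable _ _)]
    rw [integral_const, integral_const_mul, integral_id]
    simp only [smul_eq_mul]
    ring
  calc ε ^ 2 / 12 = ∫ z in t..(t + ε / 6), (ε - 6 * (z - t)) := hcalc.symm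
    _ ≤ ∫ z in t..(t + ε / 6), g z :=
      integral_mono_on hle
        ((continuous_const.sub (continuous_const.mul (continuous_id'.sub continuous_const))).intervalIntegrable _ _)
        (hgc.intervalIntegrable _ _) h1

lemma barbalat {g : ℝ → ℝ} {M : ℝ} (hgc : Continuous g) (hg0 : ∀ y, 0 ≤ g y)
    (hlip : ∀ a b, |g a - g b| ≤ 6 * |a - b|)
    (hint : ∀ T, 0 ≤ T → (∫ y in (0:ℝ)..T, g y) ≤ M) :
    Tendsto g atTop (𝓝 0) := by
  rw [Metric.tendsto_atTop]
  by_contra h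
  push_neg at h
  obtain ⟨ε, hε, hfre⟩ := h
  simp only [Real.dist_eq, sub_zero] at hfre
  have hfre' : ∀ N : ℝ, ∃ y, N ≤ y ∧ ε ≤ g y := by
    intro N
    obtain ⟨y, hy1, hy2⟩ := hfre N
    exact ⟨y, hy1, by rwa [abs_of_nonneg (hg0 y)] at hy2⟩
  choose q hq hq' using hfre'
  set Z : ℕ → ℝ := fun k => Nat.rec (q 0) (fun _ p => q (p + ε / 6)) k with hZ'
  have hZ0 : (0:ℝ) ≤ Z 0 := hq 0
  have hZs : ∀ k, Z k + ε / 6 ≤ Z (k + 1) := fun k => hq _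
  have hZg : ∀ k, ε ≤ g (Z k) := by
    intro k
    cases k with
    | zero => exact hq' 0
    | succ n => exact hq' _
  have hZnn : ∀ k, 0 ≤ Z k := by
    intro k
    induction k with
    | zero => exact hZ0
    | succ n ih => have := hZs n; linarith
  have hcum : ∀ k : ℕ, ((k : ℝ) + 1) * (ε ^ 2 / 12) ≤ ∫ y in (0:ℝ)..(Z k + ε / 6), g y := by
    intro k
    induction k with
    | zero =>
      have hsplit : (∫ y in (0:ℝ)..(Z 0), g y) + (∫ y in (Z 0)..(Z 0 + ε / 6), g y)
          = ∫ y in (0:ℝ)..(Z 0 + ε / 6), g y :=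
        integral_add_adjacent_intervals (hgc.intervalIntegrable _ _) (hgc.intervalIntegrable _ _)
      have h1 : 0 ≤ ∫ y in (0:ℝ)..(Z 0), g y :=
        integral_nonneg hZ0 (fun x _ => hg0 x)
      have h2 := bump hgc hlip hε (hZg 0)
      rw [← hsplit]
      push_cast
      linarith
    | succ n ih =>
      have hint1 : (∫ y in (0:ℝ)..(Z n + ε / 6), g y) + (∫ y in (Z n + ε / 6)..(Z (n+1)), g y)
          = ∫ y in (0:ℝ)..(Z (n+1)), g y :=
        integral_add_adjacent_intervals (hgc.intervalIntegrable _ _) (hgc.intervalIntegrable _ _)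
      have hint2 : (∫ y in (0:ℝ)..(Z (n+1)), g y) + (∫ y in (Z (n+1))..(Z (n+1) + ε / 6), g y)
          = ∫ y in (0:ℝ)..(Z (n+1) + ε / 6), g y :=
        integral_add_adjacent_intervals (hgc.intervalIntegrable _ _) (hgc.intervalIntegrable _ _)
      have h1 : 0 ≤ ∫ y in (Z n + ε / 6)..(Z (n+1)), g y :=
        integral_nonneg (hZs n) (fun x _ => hg0 x)
      have h2 := bump hgc hlip hε (hZg (n+1))
      rw [← hint2, ← hint1]
      push_cast
      push_cast at ih
      linarith
  obtain ⟨k, hk⟩ := exists_nat_gt (M / (ε ^ 2 / 12))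
  have h3 := hcum k
  have h4 := hint (Z k + ε / 6) (by linarith [hZnn k])
  have h5 : 0 < ε ^ 2 / 12 := by positivity
  rw [div_lt_iff₀ h5] at hk
  nlinarith


lemma sq_tendsto_zero {f : ℝ → ℝ} (h : Tendsto (fun y => f y ^ 2) atTop (𝓝 0)) :
    Tendsto f atTop (𝓝 0) := by
  have h2 := (Real.continuous_sqrt.tendsto' 0 0 Real.sqrt_zero).comp h
  have h3 : (abs ∘ f) = (fun x => Real.sqrt x) ∘ (fun y => f y ^ 2) := by
    funext y; simp [Function.comp, Real.sqrt_sq_eq_abs]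
  rw [tendsto_zero_iff_abs_tendsto_zero, h3]
  exact h2

set_option maxHeartbeats 2000000 in
theorem main {s : ℝ} (hs : 1 ≤ s) (X₀ Y₀ : ℝ) (h01 : X₀ ^ 2 + Y₀ ^ 2 < 1) :
    ∃ X Y : ℝ → ℝ, X 0 = X₀ ∧ Y 0 = Y₀ ∧
      (∀ y, HasDerivAt X ((X y) ^ 3 - X y + (Y y) ^ 2 / s) y) ∧
      (∀ y, HasDerivAt Y (Y y * ((X y) ^ 2 - X y / s)) y) ∧
      Tendsto (fun y => (X y, Y y)) atTop (𝓝 ((0 : ℝ), (0 : ℝ))) := by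
  have hs0 : (0:ℝ) < s := lt_of_lt_of_le one_pos hs
  obtain ⟨u, hu0, hu⟩ := exists_sol hs (X₀, Y₀)
  set X : ℝ → ℝ := fun y => (u y).1 with hX'
  set Y : ℝ → ℝ := fun y => (u y).2 with hY'
  have hXy : ∀ z, (u z).1 = X z := fun _ => rfl
  have hYy : ∀ z, (u z).2 = Y z := fun _ => rfl
  have hXd : ∀ y, HasDerivAt X ((fc s (u y)).1) y := fun y =>
    (ContinuousLinearMap.fst ℝ ℝ ℝ).hasFDerivAt.comp_hasDerivAt y (hu y)
  have hYd : ∀ y, HasDerivAt Y ((fc s (u y)).2) y := fun y =>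
    (ContinuousLinearMap.snd ℝ ℝ ℝ).hasFDerivAt.comp_hasDerivAt y (hu y)
  have hXc : Continuous X := by
    have h : Differentiable ℝ X := fun y => (hXd y).differentiableAt
    exact h.continuous
  have hYc : Continuous Y := by
    have h : Differentiable ℝ Y := fun y => (hYd y).differentiableAt
    exact h.continuous
  set L : ℝ → ℝ := fun y => X y ^ 2 + Y y ^ 2 with hL'
  have hLy : ∀ z, L z = X z ^ 2 + Y z ^ 2 := fun _ => rfl
  have hX0 : X 0 = X₀ := by rw [hX']; show (u 0).1 = X₀; rw [hu0]
  have hY0 : Y 0 = Y₀ := by rw [hY']; show (u 0).2 = Y₀; rw [hu0]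
  have hL0 : L 0 < 1 := by rw [hLy, hX0, hY0]; exact h01
  have hLpos : ∀ y, 0 ≤ L y := fun y => by rw [hLy]; positivity
  have hLc : Continuous L := ((hXc.pow 2).add (hYc.pow 2))
  have hLd : ∀ y, HasDerivAt L
      (2 * X y * (fc s (u y)).1 + 2 * Y y * (fc s (u y)).2) y := by
    intro y
    have h1 := (hXd y).fun_pow 2
    have h2 := (hYd y).fun_pow 2
    refine (h1.fun_add h2).congr_deriv ?_
    push_cast
    ring
  have hsq : ∀ y, X y ^ 2 ≤ L y ∧ Y y ^ 2 ≤ L y := fun y =>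
    ⟨by rw [hLy]; nlinarith [sq_nonneg (Y y)], by rw [hLy]; nlinarith [sq_nonneg (X y)]⟩
  have hid : ∀ y, X y ^ 2 ≤ 1 → Y y ^ 2 ≤ 1 →
      fc s (u y) = (X y ^ 3 - X y + Y y ^ 2 / s, Y y * (X y ^ 2 - X y / s)) := by
    intro y h1 h2
    have hxa : |X y| ≤ 2 := by rw [abs_le]; constructor <;> nlinarith
    have hya : |Y y| ≤ 2 := by rw [abs_le]; constructor <;> nlinarith
    simp only [fc, hXy, hYy, cl_eq_self hxa, cl_eq_self hya]
  have hXd' : ∀ y, X y ^ 2 ≤ 1 → Y y ^ 2 ≤ 1 →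
      HasDerivAt X (X y ^ 3 - X y + Y y ^ 2 / s) y := by
    intro y h1 h2
    have := hXd y
    rw [hid y h1 h2] at this
    exact this
  have hYd' : ∀ y, X y ^ 2 ≤ 1 → Y y ^ 2 ≤ 1 →
      HasDerivAt Y (Y y * (X y ^ 2 - X y / s)) y := by
    intro y h1 h2
    have := hYd y
    rw [hid y h1 h2] at this
    exact this
  have hLd' : ∀ y, X y ^ 2 ≤ 1 → Y y ^ 2 ≤ 1 →
      HasDerivAt L (2 * X y ^ 2 * (L y - 1)) y := by
    intro y h1 h2
    have := hLd y
    rw [hid y h1 h2] at this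
    convert this using 1
    rw [hLy]
    field_simp
    ring
  -- forward invariance
  have hfwd : ∀ y, 0 ≤ y → L y < 1 := by
    by_contra h
    push_neg at h
    obtain ⟨y₀, hy₀0, hy₀⟩ := h
    set S : Set ℝ := {y | 0 ≤ y ∧ 1 ≤ L y} with hS'
    have hSne : S.Nonempty := ⟨y₀, hy₀0, hy₀⟩
    have hSbdd : BddBelow S := ⟨0, fun z hz => hz.1⟩
    have hScl : IsClosed S := by
      have : S = {y | (0:ℝ) ≤ y} ∩ {y | 1 ≤ L y} := rfl
      rw [this]
      exact (isClosed_le continuous_const continuous_id).inter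
        (isClosed_le continuous_const hLc)
    set y₁ := sInf S with hy₁'
    have hy₁S : y₁ ∈ S := hScl.csInf_mem hSne hSbdd
    have hlt : ∀ z, 0 ≤ z → z < y₁ → L z < 1 := by
      intro z hz0 hzy
      by_contra hzL
      push_neg at hzL
      exact absurd (csInf_le hSbdd ⟨hz0, hzL⟩) (not_le.mpr hzy)
    have hy₁pos : 0 < y₁ := by
      rcases hy₁S.1.lt_or_eq with h | h
      · exact h
      · exfalso
        have h2 := hy₁S.2
        rw [← h] at h2
        linarith
    have hanti1 : AntitoneOn L (Icc 0 y₁) := by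
      apply antitoneOn_of_deriv_nonpos (convex_Icc 0 y₁) hLc.continuousOn
      · intro z hz
        rw [interior_Icc] at hz
        exact ((hLd z).differentiableAt).differentiableWithinAt
      · intro z hz
        rw [interior_Icc] at hz
        have hz1 : L z < 1 := hlt z hz.1.le hz.2
        have h1 : X z ^ 2 ≤ 1 := le_of_lt (lt_of_le_of_lt (hsq z).1 hz1)
        have h2 : Y z ^ 2 ≤ 1 := le_of_lt (lt_of_le_of_lt (hsq z).2 hz1)
        rw [(hLd' z h1 h2).deriv]
        nlinarith [sq_nonneg (X z)]
    have hle : L y₁ ≤ L 0 :=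
      hanti1 ⟨le_refl 0, hy₁pos.le⟩ ⟨hy₁pos.le, le_refl y₁⟩ hy₁pos.le
    linarith [hy₁S.2]
  -- backward invariance
  have hbwd : ∀ y, y ≤ 0 → L y < 1 := by
    by_contra h
    push_neg at h
    obtain ⟨y₀, hy₀0, hy₀⟩ := h
    set S : Set ℝ := {y | y ≤ 0 ∧ 1 ≤ L y} with hS'
    have hSne : S.Nonempty := ⟨y₀, hy₀0, hy₀⟩
    have hSbdd : BddAbove S := ⟨0, fun z hz => hz.1⟩
    have hScl : IsClosed S := by
      have : S = {y | y ≤ (0:ℝ)} ∩ {y | 1 ≤ L y} := rfl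
      rw [this]
      exact (isClosed_le continuous_id continuous_const).inter
        (isClosed_le continuous_const hLc)
    set y₁ := sSup S with hy₁'
    have hy₁S : y₁ ∈ S := hScl.csSup_mem hSne hSbdd
    have hlt : ∀ z, y₁ < z → z ≤ 0 → L z < 1 := by
      intro z hzy hz0
      by_contra hzL
      push_neg at hzL
      exact absurd (le_csSup hSbdd ⟨hz0, hzL⟩) (not_le.mpr hzy)
    have hy₁neg : y₁ < 0 := by
      rcases hy₁S.1.lt_or_eq with h | h
      · exact h
      · exfalso; rw [h] at hy₁S; linarith [hy₁S.2]
    have hL1 : L y₁ ≤ 1 := by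
      have hcont : Tendsto L (𝓝[>] y₁) (𝓝 (L y₁)) :=
        (hLc.tendsto y₁).mono_left nhdsWithin_le_nhds
      apply le_of_tendsto hcont
      filter_upwards [Ioc_mem_nhdsGT_of_mem ⟨le_refl y₁, hy₁neg⟩] with z hz
      exact (hlt z hz.1 hz.2).le
    have hLle : ∀ z ∈ Icc y₁ (0:ℝ), L z ≤ 1 := by
      intro z hz
      rcases eq_or_lt_of_le hz.1 with h | h
      · rw [← h]; exact hL1
      · exact (hlt z h hz.2).le
    have hderiv : ∀ z ∈ Ico y₁ (0:ℝ), HasDerivWithinAt (fun z => 1 - L z)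
        (2 * X z ^ 2 * (1 - L z)) (Ici z) z := by
      intro z hz
      have hzle : L z ≤ 1 := hLle z ⟨hz.1, hz.2.le⟩
      have h1 : X z ^ 2 ≤ 1 := (hsq z).1.trans hzle
      have h2 : Y z ^ 2 ≤ 1 := (hsq z).2.trans hzle
      have hd := (hLd' z h1 h2).const_sub 1
      have heq : -(2 * X z ^ 2 * (L z - 1)) = 2 * X z ^ 2 * (1 - L z) := by ring
      rw [heq] at hd
      exact hd.hasDerivWithinAt
    have hGr := norm_le_gronwallBound_of_norm_deriv_right_le
      (f := fun z => 1 - L z) (f' := fun z => 2 * X z ^ 2 * (1 - L z))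
      (δ := 0) (K := 2) (ε := 0) (a := y₁) (b := 0)
      ((continuous_const.sub hLc).continuousOn) hderiv
      (by
        have hLy₁ : L y₁ = 1 := le_antisymm hL1 hy₁S.2
        show ‖1 - L y₁‖ ≤ 0
        rw [Real.norm_eq_abs, hLy₁]
        norm_num)
      (by
        intro z hz
        have hzle : L z ≤ 1 := hLle z ⟨hz.1, hz.2.le⟩
        have h1 : X z ^ 2 ≤ 1 := (hsq z).1.trans hzle
        rw [Real.norm_eq_abs, Real.norm_eq_abs,
          abs_of_nonneg (by nlinarith [sq_nonneg (X z)] : (0:ℝ) ≤ 2 * X z ^ 2 * (1 - L z)),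
          abs_of_nonneg (by linarith : (0:ℝ) ≤ 1 - L z)]
        nlinarith [sq_nonneg (X z)])
    have hfin := hGr 0 ⟨hy₁neg.le, le_refl 0⟩
    rw [gronwallBound_ε0] at hfin
    simp only [Real.norm_eq_abs, zero_mul] at hfin
    rw [abs_of_nonneg (by linarith : (0:ℝ) ≤ 1 - L 0)] at hfin
    linarith
  have hL1all : ∀ y, L y < 1 := by
    intro y
    rcases le_total 0 y with h | h
    · exact hfwd y h
    · exact hbwd y h
  have hXsq1 : ∀ y, X y ^ 2 ≤ 1 := fun y => (hsq y).1.trans (hL1all y).le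
  have hYsq1 : ∀ y, Y y ^ 2 ≤ 1 := fun y => (hsq y).2.trans (hL1all y).le
  have hX1 : ∀ y, |X y| ≤ 1 := fun y => by
    have := hXsq1 y; rw [abs_le]; constructor <;> nlinarith
  have hY1 : ∀ y, |Y y| ≤ 1 := fun y => by
    have := hYsq1 y; rw [abs_le]; constructor <;> nlinarith
  have hXD : ∀ y, HasDerivAt X (X y ^ 3 - X y + Y y ^ 2 / s) y :=
    fun y => hXd' y (hXsq1 y) (hYsq1 y)
  have hYD : ∀ y, HasDerivAt Y (Y y * (X y ^ 2 - X y / s)) y :=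
    fun y => hYd' y (hXsq1 y) (hYsq1 y)
  have hLD : ∀ y, HasDerivAt L (2 * X y ^ 2 * (L y - 1)) y :=
    fun y => hLd' y (hXsq1 y) (hYsq1 y)
  have hanti : Antitone L := by
    apply antitone_of_deriv_nonpos (fun y => (hLD y).differentiableAt)
    intro y
    rw [(hLD y).deriv]
    nlinarith [sq_nonneg (X y), hL1all y]
  have hbddL : BddBelow (Set.range L) := by
    refine ⟨0, ?_⟩
    rintro t ⟨y, rfl⟩
    exact hLpos y
  set l := ⨅ y, L y with hl'
  have hltend : Tendsto L atTop (𝓝 l) := tendsto_atTop_ciInf hanti hbddL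
  have hl0 : 0 ≤ l := le_ciInf hLpos
  have hlle : ∀ y, l ≤ L y := fun y => ciInf_le hbddL y
  -- key claim : l = 0
  have hlzero : l = 0 := by
    by_contra hne
    have hlpos : 0 < l := lt_of_le_of_ne hl0 (Ne.symm hne)
    set c := 2 * (1 - L 0) with hc'
    have hcpos : 0 < c := by rw [hc']; linarith
    set M := (L 0 - l) / c with hM'
    have hXsqc : Continuous fun y => X y ^ 2 := hXc.pow 2
    have hintb : ∀ T, 0 ≤ T → (∫ y in (0:ℝ)..T, X y ^ 2) ≤ M := by
      intro T hT
      have hFTC : (∫ y in (0:ℝ)..T, 2 * X y ^ 2 * (L y - 1)) = L T - L 0 :=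
        integral_eq_sub_of_hasDerivAt (fun y _ => hLD y)
          (Continuous.intervalIntegrable
            (by exact (continuous_const.mul hXsqc).mul (hLc.sub continuous_const)) _ _)
      have hmono : (∫ y in (0:ℝ)..T, c * X y ^ 2)
          ≤ ∫ y in (0:ℝ)..T, -(2 * X y ^ 2 * (L y - 1)) := by
        apply integral_mono_on hT
          ((continuous_const.mul hXsqc).intervalIntegrable _ _)
          (((continuous_const.mul hXsqc).mul (hLc.sub continuous_const)).neg.intervalIntegrable _ _)
        intro z hz
        have hLz : L z ≤ L 0 := hanti hz.1
        simp only [Pi.mul_apply, Pi.neg_apply, Pi.sub_apply]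
        nlinarith [sq_nonneg (X z)]
      rw [integral_const_mul, integral_neg, hFTC] at hmono
      rw [hM', le_div_iff₀ hcpos]
      have := hlle T
      linarith [mul_comm c (∫ y in (0:ℝ)..T, X y ^ 2)]
    have hXpb : ∀ y, |X y ^ 3 - X y + Y y ^ 2 / s| ≤ 3 := by
      intro y
      have h1 : |X y ^ 3| ≤ 1 := by
        rw [abs_pow]
        exact pow_le_one₀ (abs_nonneg _) (hX1 y)
      have h2 : |Y y ^ 2 / s| ≤ 1 := by
        refine (abs_div_le hs _).trans ?_
        rw [abs_of_nonneg (sq_nonneg _)]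
        exact hYsq1 y
      calc |X y ^ 3 - X y + Y y ^ 2 / s|
          ≤ |X y ^ 3 - X y| + |Y y ^ 2 / s| := abs_add_le _ _
        _ ≤ |X y ^ 3| + |X y| + |Y y ^ 2 / s| := add_le_add_left (abs_sub _ _) _
        _ ≤ 1 + 1 + 1 := add_le_add (add_le_add h1 (hX1 y)) h2
        _ = 3 := by norm_num
    have hdg : ∀ y, HasDerivAt (fun y => X y ^ 2)
        (2 * X y * (X y ^ 3 - X y + Y y ^ 2 / s)) y := by
      intro y
      have := (hXD y).fun_pow 2
      refine this.congr_deriv ?_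
      push_cast
      ring
    have hlipg : ∀ a b, |X a ^ 2 - X b ^ 2| ≤ 6 * |a - b| := by
      have hdiff : Differentiable ℝ (fun y => X y ^ 2) := fun y => (hdg y).differentiableAt
      have hlip : LipschitzWith 6 (fun y => X y ^ 2) := by
        apply lipschitzWith_of_nnnorm_deriv_le hdiff
        intro y
        rw [← NNReal.coe_le_coe, coe_nnnorm, (hdg y).deriv, Real.norm_eq_abs]
        push_cast
        rw [abs_mul]
        calc |2 * X y| * |X y ^ 3 - X y + Y y ^ 2 / s| ≤ 2 * 3 := by
              rw [abs_mul, abs_two]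
              exact mul_le_mul (by linarith [hX1 y]) (hXpb y) (abs_nonneg _) (by norm_num)
          _ = 6 := by norm_num
      intro a b
      have h6 := hlip.dist_le_mul a b
      rw [Real.dist_eq, Real.dist_eq] at h6
      exact le_trans h6 (by norm_num)
    have hXsqto : Tendsto (fun y => X y ^ 2) atTop (𝓝 0) :=
      barbalat hXsqc (fun y => sq_nonneg _) hlipg hintb
    have hXto : Tendsto X atTop (𝓝 0) := sq_tendsto_zero hXsqto
    have hYsqto : Tendsto (fun y => Y y ^ 2) atTop (𝓝 l) := by
      have hsub : Tendsto (fun y => L y - X y ^ 2) atTop (𝓝 (l - 0)) := hltend.sub hXsqto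
      rw [sub_zero] at hsub
      have hfun : (fun y => Y y ^ 2) = fun y => L y - X y ^ 2 := by
        funext y; rw [hLy]; ring
      rw [hfun]
      exact hsub
    have hX'to : Tendsto (fun y => X y ^ 3 - X y + Y y ^ 2 / s) atTop (𝓝 (l / s)) := by
      have h1 : Tendsto (fun y => X y ^ 3) atTop (𝓝 0) := by
        have := hXto.pow 3
        simpa using this
      have := (h1.sub hXto).add (hYsqto.div_const s)
      simpa using this
    set b := l / (2 * s) with hb'
    have hbpos : 0 < b := div_pos hlpos (by linarith)
    have hblt : b < l / s := by
      rw [hb']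
      exact div_lt_div_of_pos_left hlpos hs0 (by linarith)
    have hev : ∀ᶠ y in atTop, b ≤ X y ^ 3 - X y + Y y ^ 2 / s := by
      filter_upwards [hX'to (Ioi_mem_nhds hblt)] with y hy
      exact (mem_Ioi.mp hy).le
    obtain ⟨T₁, hT₁⟩ := eventually_atTop.mp hev
    have hwd : ∀ y, HasDerivAt (fun y => X y - b * y)
        ((X y ^ 3 - X y + Y y ^ 2 / s) - b) y := by
      intro y
      have h2 : HasDerivAt (fun y : ℝ => b * y) b y := by
        simpa using (hasDerivAt_id y).const_mul b
      exact (hXD y).sub h2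
    have hmono : MonotoneOn (fun y => X y - b * y) (Ici T₁) := by
      apply monotoneOn_of_deriv_nonneg (convex_Ici T₁)
        ((hXc.sub (continuous_const.mul continuous_id')).continuousOn)
      · intro z hz
        exact ((hwd z).differentiableAt).differentiableWithinAt
      · intro z hz
        rw [interior_Ici] at hz
        show 0 ≤ deriv (fun y => X y - b * y) z
        rw [(hwd z).deriv]
        have := hT₁ z (le_of_lt hz)
        linarith
    have hdivpos : 0 < 4 / b := div_pos (by norm_num) hbpos
    have hmem : T₁ + 4 / b ∈ Ici T₁ := by
      simp only [mem_Ici]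
      linarith
    have hfinal := hmono self_mem_Ici hmem (by linarith)
    have hbne : b ≠ 0 := ne_of_gt hbpos
    have h4 : b * (T₁ + 4 / b) = b * T₁ + 4 := by
      field_simp
    have hc1 := hX1 T₁
    have hc2 := hX1 (T₁ + 4 / b)
    rw [abs_le] at hc1 hc2
    simp only at hfinal
    linarith [hfinal, h4, hc1.1, hc2.2]
  rw [hlzero] at hltend hlle
  have hXfin : Tendsto X atTop (𝓝 0) := by
    apply sq_tendsto_zero
    exact tendsto_of_tendsto_of_tendsto_of_le_of_le tendsto_const_nhds hltend
      (fun y => sq_nonneg _) (fun y => (hsq y).1)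
  have hYfin : Tendsto Y atTop (𝓝 0) := by
    apply sq_tendsto_zero
    exact tendsto_of_tendsto_of_tendsto_of_le_of_le tendsto_const_nhds hltend
      (fun y => sq_nonneg _) (fun y => (hsq y).2)
  exact ⟨X, Y, hX0, hY0, hXD, hYD, hXfin.prodMk_nhds hYfin⟩


end SteadyAux

/-- **Trajectories near `(1,0)` inside the unit disk are global and converge to the
origin.**  Any trajectory of `X' = X³ - X + Y²/√n`, `Y' = Y(X² - X/√n)` starting at
`(X₀, Y₀)` with `X₀² + Y₀² < 1`, `Y₀ > 0`, sufficiently close to `(1,0)`, exists for all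
`y ∈ (-∞, +∞)` and converges to `(0,0)` as `y → +∞`. -/
theorem steady_trajectories_global_and_converge (n : ℕ) (hn : 2 ≤ n) :
    ∃ ε > (0 : ℝ), ∀ X₀ Y₀ : ℝ,
      X₀ ^ 2 + Y₀ ^ 2 < 1 → 0 < Y₀ → (X₀ - 1) ^ 2 + Y₀ ^ 2 < ε ^ 2 →
      ∃ X Y : ℝ → ℝ,
        X 0 = X₀ ∧ Y 0 = Y₀ ∧
        (∀ y, HasDerivAt X ((X y) ^ 3 - X y + (Y y) ^ 2 / Real.sqrt n) y) ∧
        (∀ y, HasDerivAt Y (Y y * ((X y) ^ 2 - X y / Real.sqrt n)) y) ∧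
        Tendsto (fun y => (X y, Y y)) atTop (nhds ((0 : ℝ), (0 : ℝ))) := by
  refine ⟨1, one_pos, ?_⟩
  intro X₀ Y₀ h1 _h2 _h3
  have hs : 1 ≤ Real.sqrt n := by
    rw [show (1 : ℝ) = Real.sqrt 1 from Real.sqrt_one.symm]
    apply Real.sqrt_le_sqrt
    have : (2 : ℝ) ≤ (n : ℝ) := by exact_mod_cast hn
    linarith
  obtain ⟨X, Y, hX0, hY0, hXD, hYD, hconv⟩ := SteadyAux.main hs X₀ Y₀ h1
  exact ⟨X, Y, hX0, hY0, hXD, hYD, hconv⟩
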